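/- Let (Ω, F, P) be a probability space. Let (B_i)_{i∈ℕ} and (B_i*)_{i∈ℕ} be σ-algebras with B_i ⊆ B_i* for all i, such that (B_i) increases to B_∞ and (B_i*) decreases to B_∞*, and assume B_∞ = B_∞* modulo P (they contain the same events up to P-null sets). Then for every φ ∈ L¹(P), lim_{i→∞} sup_{C_i : B_i ⊆ C_i ⊆ B_i*} ‖E[φ | C_i] − E[φ | B_∞]‖_{L¹(P)} = 0. -/

import Mathlib

open MeasureTheory Filter
open scoped NNReal ENNReal

set_option maxHeartbeats 1000000
set_option synthInstance.maxHeartbeats 400000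

/-!
STATEMENT 0 (Lemma of Föllmer–Ort): let `(Ω, F, P)` be a probability space, let
`B_i ⊆ B_i*` be σ-algebras with `(B_i)` increasing to `B_∞` and `(B_i*)` decreasing to
`B_∞*`, and assume `B_∞ = B_∞*` modulo `P`.  Then for every `φ ∈ L¹(P)`,
`lim_i sup_{B_i ⊆ C_i ⊆ B_i*} ‖E[φ|C_i] − E[φ|B_∞]‖_{L¹(P)} = 0`.
-/

namespace FollmerAux

variable {Ω : Type*}

lemma indicator_ae_eq_of_symmDiff_null {m0 : MeasurableSpace Ω} {P : Measure Ω}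
    {s t : Set Ω} (c : ℝ) (h : P (symmDiff s t) = 0) :
    s.indicator (fun _ => c) =ᵐ[P] t.indicator (fun _ => c) := by
  have hsub : {x | s.indicator (fun _ => c) x ≠ t.indicator (fun _ => c) x} ⊆ symmDiff s t := by
    intro x hx
    by_cases hs : x ∈ s <;> by_cases ht : x ∈ t <;>
      simp_all [Set.indicator_of_mem, Set.indicator_of_notMem, Set.mem_symmDiff]
  exact (MeasureTheory.ae_iff (p := fun x =>
    s.indicator (fun _ => c) x = t.indicator (fun _ => c) x)).2
    (measure_mono_null hsub h)

lemma exists_measurable_ae_eq {m0 : MeasurableSpace Ω} (P : Measure Ω)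
    (m₁ m₂ : MeasurableSpace Ω)
    (h : ∀ s, MeasurableSet[m₂] s → ∃ t, MeasurableSet[m₁] t ∧ P (symmDiff s t) = 0)
    (f : Ω → ℝ) (hf : Measurable[m₂] f) :
    ∃ g : Ω → ℝ, Measurable[m₁] g ∧ f =ᵐ[P] g := by
  have hsimple : ∀ s : @SimpleFunc Ω m₂ ℝ,
      ∃ g : Ω → ℝ, Measurable[m₁] g ∧ ⇑s =ᵐ[P] g := by
    intro s
    refine SimpleFunc.induction (motive := fun s : @SimpleFunc Ω m₂ ℝ =>
      ∃ g : Ω → ℝ, Measurable[m₁] g ∧ ⇑s =ᵐ[P] g) ?_ ?_ s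
    · intro c u hu
      obtain ⟨t, ht, hut⟩ := h u hu
      refine ⟨t.indicator (fun _ => c), (@measurable_const ℝ Ω _ m₁ c).indicator ht, ?_⟩
      have : ⇑(SimpleFunc.piecewise u hu (SimpleFunc.const Ω c) (SimpleFunc.const Ω 0))
          = u.indicator (fun _ => c) := by
        funext x
        by_cases hx : x ∈ u <;>
          simp [SimpleFunc.piecewise_apply, hx, Set.indicator_of_mem, Set.indicator_of_notMem]
      rw [this]
      exact indicator_ae_eq_of_symmDiff_null c hut
    · rintro s₁ s₂ _ ⟨g₁, hg₁, hae₁⟩ ⟨g₂, hg₂, hae₂⟩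
      refine ⟨g₁ + g₂, hg₁.add hg₂, ?_⟩
      filter_upwards [hae₁, hae₂] with x h1 h2
      simp [h1, h2]
  choose g hgm hgae using fun n =>
    hsimple (SimpleFunc.approxOn f hf Set.univ 0 (Set.mem_univ 0) n)
  refine ⟨fun x => (Filter.liminf (fun n => ((g n x : ℝ) : EReal)) Filter.atTop).toReal,
    measurable_ereal_toReal.comp
      (Measurable.liminf fun n => measurable_coe_real_ereal.comp (hgm n)), ?_⟩
  have hae : ∀ᵐ x ∂P, ∀ n,
      (SimpleFunc.approxOn f hf Set.univ 0 (Set.mem_univ 0) n : Ω → ℝ) x = g n x :=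
    ae_all_iff.2 hgae
  filter_upwards [hae] with x hx
  have htend : Tendsto (fun n => g n x) atTop (nhds (f x)) := by
    have h0 := SimpleFunc.tendsto_approxOn hf (Set.mem_univ 0)
      (x := x) (by simp)
    exact h0.congr hx
  have h2 : Tendsto (fun n => ((g n x : ℝ) : EReal)) atTop (nhds ((f x : ℝ) : EReal)) :=
    (continuous_coe_real_ereal.tendsto _).comp htend
  rw [h2.liminf_eq, EReal.toReal_coe]


lemma tendsto_condexp_iInf_of_bdd {m0 : MeasurableSpace Ω} (P : Measure Ω)
    [IsProbabilityMeasure P]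
    (Bstar : ℕ → MeasurableSpace Ω) (hBstar : ∀ i, Bstar i ≤ m0) (hanti : Antitone Bstar)
    (φ : Ω → ℝ) (hφ : Integrable φ P) (R : ℝ≥0) (hbdd : ∀ᵐ x ∂P, |φ x| ≤ R) :
    Tendsto (fun i => eLpNorm (P[φ|Bstar i] - P[φ|⨅ j, Bstar j]) 1 P) atTop (nhds 0) := by
  have hminf : (⨅ j, Bstar j) ≤ m0 := (iInf_le Bstar 0).trans (hBstar 0)
  set f : ℕ → Ω → ℝ := fun i => P[φ|Bstar i] with hfdef
  have hfint : ∀ i, Integrable (f i) P := fun i => integrable_condExp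
  have hfsm : ∀ i, StronglyMeasurable[Bstar i] (f i) := fun i => stronglyMeasurable_condExp
  have hfaesm : ∀ i, AEStronglyMeasurable (f i) P := fun i =>
    ((hfsm i).mono (hBstar i)).aestronglyMeasurable
  have hfbdd : ∀ i, ∀ᵐ x ∂P, |f i x| ≤ R := fun i => ae_bdd_condExp_of_ae_bdd hbdd
  have htower : ∀ i j, i ≤ j → P[f i|Bstar j] =ᵐ[P] f j := fun i j hij =>
    condExp_condExp_of_le (hanti hij) (hBstar i)
  have hprod : ∀ i j, Integrable (fun x => f i x * f j x) P := fun i j =>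
    (hfint j).bdd_mul (hfaesm i)
      ((hfbdd i).mono fun x hx => by simpa [Real.norm_eq_abs] using hx)
  have hcross : ∀ i j, i ≤ j → ∫ x, f i x * f j x ∂P = ∫ x, f j x * f j x ∂P := by
    intro i j hij
    have hint : Integrable (fun x => f j x * f i x) P := by
      have := hprod i j
      simpa [mul_comm] using this
    have h1 : P[fun x => f j x * f i x|Bstar j] =ᵐ[P] fun x => f j x * (P[f i|Bstar j]) x :=
      condExp_mul_of_stronglyMeasurable_left (hfsm j) hint (hfint i)
    calc ∫ x, f i x * f j x ∂P = ∫ x, f j x * f i x ∂P := by simp_rw [mul_comm]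
      _ = ∫ x, (P[fun x => f j x * f i x|Bstar j]) x ∂P :=
          (integral_condExp (μ := P) (f := fun x => f j x * f i x) (hBstar j)).symm
      _ = ∫ x, f j x * f j x ∂P := by
          refine integral_congr_ae ?_
          filter_upwards [h1, htower i j hij] with x h1x h2x
          rw [h1x, h2x]
  set I : ℕ → ℝ := fun i => ∫ x, f i x * f i x ∂P with hIdef
  have hdiffsq : ∀ i j, Integrable (fun x => (f i x - f j x) * (f i x - f j x)) P := by
    intro i j
    refine Integrable.bdd_mul (c := R + R) ((hfint i).sub (hfint j))
      ((hfaesm i).sub (hfaesm j)) ?_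
    filter_upwards [hfbdd i, hfbdd j] with x h1 h2
    simp only [Pi.sub_apply, Real.norm_eq_abs]
    calc |f i x - f j x| ≤ |f i x| + |f j x| := abs_sub _ _
      _ ≤ R + R := add_le_add h1 h2
  have hIdiff : ∀ i j, i ≤ j →
      ∫ x, (f i x - f j x) * (f i x - f j x) ∂P = I i - I j := by
    intro i j hij
    have hre : ∀ x, (f i x - f j x) * (f i x - f j x)
        = (f i x * f i x - 2 * (f i x * f j x)) + f j x * f j x := fun x => by ring
    have hA : Integrable (fun x => f i x * f i x - 2 * (f i x * f j x)) P :=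
      (hprod i i).sub ((hprod i j).const_mul 2)
    rw [integral_congr_ae (Eventually.of_forall hre),
      integral_add hA (hprod j j),
      integral_sub (hprod i i) ((hprod i j).const_mul 2),
      integral_const_mul, hcross i j hij]
    simp only [hIdef]
    ring
  have hImono : ∀ i j, i ≤ j → I j ≤ I i := by
    intro i j hij
    have h0 : 0 ≤ ∫ x, (f i x - f j x) * (f i x - f j x) ∂P :=
      integral_nonneg fun x => mul_self_nonneg _
    linarith [hIdiff i j hij]
  have hInonneg : ∀ i, 0 ≤ I i := fun i => integral_nonneg fun x => mul_self_nonneg _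
  have hIcauchy : CauchySeq I := by
    refine (tendsto_atTop_ciInf (fun i j hij => hImono i j hij) ?_).cauchySeq
    exact ⟨0, by rintro x ⟨i, rfl⟩; exact hInonneg i⟩
  -- Cauchy in L¹
  set X : ℕ → (Ω →₁[P] ℝ) := fun i => (hfint i).toL1 (f i) with hXdef
  have hXcauchy : CauchySeq X := by
    rw [Metric.cauchySeq_iff']
    intro ε hε
    obtain ⟨N, hN⟩ := Metric.cauchySeq_iff'.1 hIcauchy (ε * ε) (by positivity)
    refine ⟨N, fun n hn => ?_⟩
    have hdist : dist (X n) (X N) = ∫ x, ‖f n x - f N x‖ ∂P := by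
      rw [dist_eq_norm, hXdef]
      rw [← Integrable.toL1_sub]
      exact L1.norm_of_fun_eq_integral_norm ((hfint n).sub (hfint N))
    rw [hdist]
    have hIN : I N - I n < ε * ε := by
      have := hN n hn
      rw [Real.dist_eq] at this
      have := abs_lt.1 this
      linarith [this.1, this.2]
    have hptwise : ∀ x, ‖f n x - f N x‖ ≤ ε / 2 + (f N x - f n x) * (f N x - f n x) / (2 * ε) := by
      intro x
      have habs : |f N x - f n x| * |f N x - f n x| = (f N x - f n x) * (f N x - f n x) :=
        abs_mul_abs_self _
      have hsq := sq_nonneg (|f N x - f n x| - ε)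
      have hnn := abs_nonneg (f N x - f n x)
      rw [Real.norm_eq_abs, abs_sub_comm]
      rw [div_add_div _ _ (by norm_num : (2:ℝ) ≠ 0) (by positivity : 2 * ε ≠ 0), le_div_iff₀ (by positivity)]
      nlinarith [hsq, habs, hnn]
    have hmono := integral_mono (((hfint n).sub (hfint N)).norm)
      ((integrable_const (ε / 2)).add ((hdiffsq N n).div_const (2 * ε))) hptwise
    have hval : ∫ x, (ε / 2 + (f N x - f n x) * (f N x - f n x) / (2 * ε)) ∂P
        = ε / 2 + (I N - I n) / (2 * ε) := by
      have hsecond : ∫ x, (f N x - f n x) * (f N x - f n x) / (2 * ε) ∂P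
          = (I N - I n) / (2 * ε) := by
        rw [integral_div, hIdiff N n hn]
      rw [integral_add (integrable_const _) ((hdiffsq N n).div_const (2 * ε)),
        hsecond, integral_const]
      simp
    calc ∫ x, ‖f n x - f N x‖ ∂P ≤ ε / 2 + (I N - I n) / (2 * ε) := by
          rw [← hval]; exact hmono
      _ < ε / 2 + (ε * ε) / (2 * ε) := by
          have : (I N - I n) / (2 * ε) < (ε * ε) / (2 * ε) :=
            div_lt_div_of_pos_right hIN (by positivity)
          linarith
      _ = ε := by field_simp; ring
  obtain ⟨F, hF⟩ := cauchySeq_tendsto_of_complete hXcauchy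
  -- L¹ convergence of f i to F
  have hL1 : Tendsto (fun i => eLpNorm (f i - ⇑F) 1 P) atTop (nhds 0) := by
    have heq : ∀ i, eLpNorm (f i - ⇑F) 1 P = ENNReal.ofReal (dist (X i) F) := by
      intro i
      rw [Lp.dist_def, ENNReal.ofReal_toReal
        (((Lp.memLp (X i)).sub (Lp.memLp F)).eLpNorm_ne_top)]
      refine eLpNorm_congr_ae ?_
      filter_upwards [(hfint i).coeFn_toL1, Lp.coeFn_sub (X i) F] with x h1 h2
      simp only [Pi.sub_apply, h2, hXdef, h1]
    have hdist : Tendsto (fun i => dist (X i) F) atTop (nhds 0) :=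
      tendsto_iff_dist_tendsto_zero.1 hF
    have := (ENNReal.continuous_ofReal.tendsto 0).comp hdist
    simpa [heq, Function.comp_def] using this
  -- identify F with the conditional expectation
  have hFae : (⇑F : Ω → ℝ) =ᵐ[P] P[φ|⨅ j, Bstar j] := by
    have hmeasconv : TendstoInMeasure P f atTop ⇑F :=
      tendstoInMeasure_of_tendsto_eLpNorm one_ne_zero hfaesm
        (Lp.aestronglyMeasurable F) hL1
    obtain ⟨ns, hns_mono, hns⟩ := hmeasconv.exists_seq_tendsto_ae
    set G : Ω → ℝ :=
      fun x => (Filter.liminf (fun k => ((f (ns k) x : ℝ) : EReal)) Filter.atTop).toReal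
      with hGdef
    have hGmeas : ∀ j, Measurable[Bstar j] G := by
      intro j
      have hrw : G = fun x =>
          (Filter.liminf (fun k => ((f (ns (k + j)) x : ℝ) : EReal)) Filter.atTop).toReal := by
        funext x
        show (Filter.liminf (fun k => ((f (ns k) x : ℝ) : EReal)) Filter.atTop).toReal = _
        exact congrArg EReal.toReal
          (Filter.liminf_nat_add (fun k => ((f (ns k) x : ℝ) : EReal)) j).symm
      rw [hrw]
      refine measurable_ereal_toReal.comp (Measurable.liminf fun k =>
        measurable_coe_real_ereal.comp ?_)
      refine ((hfsm (ns (k + j))).measurable).mono (hanti ?_) le_rfl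
      exact le_trans (Nat.le_add_left j k) (hns_mono.le_apply)
    have hGminf : Measurable[⨅ j, Bstar j] G := by
      intro t ht
      exact MeasurableSpace.measurableSet_iInf.2 fun j => hGmeas j ht
    have hFG : (⇑F : Ω → ℝ) =ᵐ[P] G := by
      filter_upwards [hns] with x hx
      have h2 : Tendsto (fun k => ((f (ns k) x : ℝ) : EReal)) atTop
          (nhds ((F x : ℝ) : EReal)) := (continuous_coe_real_ereal.tendsto _).comp hx
      rw [hGdef]
      simp only
      rw [h2.liminf_eq, EReal.toReal_coe]
    refine ae_eq_condExp_of_forall_setIntegral_eq hminf hφ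
      (fun s _ _ => (L1.integrable_coeFn F).integrableOn) ?_
      ⟨G, hGminf.stronglyMeasurable, hFG⟩
    intro s hs _
    have hs' : ∀ i, MeasurableSet[Bstar i] s := fun i => (iInf_le Bstar i) s hs
    have h1 : Tendsto (fun i => ∫ x in s, f i x ∂P) atTop (nhds (∫ x in s, F x ∂P)) :=
      tendsto_setIntegral_of_L1' (⇑F) (L1.integrable_coeFn F).aestronglyMeasurable
        (Eventually.of_forall hfint) hL1 s
    have h2 : ∀ i, ∫ x in s, f i x ∂P = ∫ x in s, φ x ∂P := fun i =>
      setIntegral_condExp (hBstar i) hφ (hs' i)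
    have h1' : Tendsto (fun _ : ℕ => ∫ x in s, φ x ∂P) atTop (nhds (∫ x in s, F x ∂P)) := by
      refine h1.congr fun i => h2 i
    exact tendsto_nhds_unique h1' tendsto_const_nhds
  have hfinal : ∀ i, eLpNorm (f i - P[φ|⨅ j, Bstar j]) 1 P = eLpNorm (f i - ⇑F) 1 P :=
    fun i => eLpNorm_congr_ae (EventuallyEq.rfl.sub hFae.symm)
  exact hL1.congr fun i => (hfinal i).symm


lemma tendsto_condexp_iInf {m0 : MeasurableSpace Ω} (P : Measure Ω)
    [IsProbabilityMeasure P]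
    (Bstar : ℕ → MeasurableSpace Ω) (hBstar : ∀ i, Bstar i ≤ m0) (hanti : Antitone Bstar)
    (φ : Ω → ℝ) (hφ : Integrable φ P) :
    Tendsto (fun i => eLpNorm (P[φ|Bstar i] - P[φ|⨅ j, Bstar j]) 1 P) atTop (nhds 0) := by
  have hminf : (⨅ j, Bstar j) ≤ m0 := (iInf_le Bstar 0).trans (hBstar 0)
  have key : ∀ ⦃ψ : Ω → ℝ⦄, Integrable ψ P →
      Tendsto (fun i => eLpNorm (P[ψ|Bstar i] - P[ψ|⨅ j, Bstar j]) 1 P) atTop (nhds 0) := by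
    refine Integrable.induction (μ := P)
      (P := fun ψ : Ω → ℝ =>
        Tendsto (fun i => eLpNorm (P[ψ|Bstar i] - P[ψ|⨅ j, Bstar j]) 1 P) atTop (nhds 0))
      ?_ ?_ ?_ ?_
    · -- indicators
      intro c s hs hsfin
      refine tendsto_condexp_iInf_of_bdd P Bstar hBstar hanti _
        ((integrable_const c).indicator hs) ‖c‖₊ ?_
      refine Eventually.of_forall fun x => ?_
      by_cases hx : x ∈ s <;>
        simp [Set.indicator_of_mem, Set.indicator_of_notMem, hx, Real.norm_eq_abs,
          abs_nonneg, coe_nnnorm]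
    · -- addition
      intro f g _ hfint hgint hPf hPg
      have hb : ∀ i, eLpNorm (P[f + g|Bstar i] - P[f + g|⨅ j, Bstar j]) 1 P
          ≤ eLpNorm (P[f|Bstar i] - P[f|⨅ j, Bstar j]) 1 P
            + eLpNorm (P[g|Bstar i] - P[g|⨅ j, Bstar j]) 1 P := by
        intro i
        have h1 := condExp_add (μ := P) (m := Bstar i) hfint hgint
        have h2 := condExp_add (μ := P) (m := ⨅ j, Bstar j) hfint hgint
        have heq : P[f + g|Bstar i] - P[f + g|⨅ j, Bstar j]
            =ᵐ[P] (P[f|Bstar i] - P[f|⨅ j, Bstar j]) + (P[g|Bstar i] - P[g|⨅ j, Bstar j]) := by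
          filter_upwards [h1, h2] with x h1x h2x
          simp only [Pi.sub_apply, Pi.add_apply, h1x, h2x]
          ring
        rw [eLpNorm_congr_ae heq]
        exact eLpNorm_add_le
          (((stronglyMeasurable_condExp.mono (hBstar i)).aestronglyMeasurable).sub
            ((stronglyMeasurable_condExp.mono hminf).aestronglyMeasurable))
          (((stronglyMeasurable_condExp.mono (hBstar i)).aestronglyMeasurable).sub
            ((stronglyMeasurable_condExp.mono hminf).aestronglyMeasurable)) le_rfl
      have hsum : Tendsto (fun i => eLpNorm (P[f|Bstar i] - P[f|⨅ j, Bstar j]) 1 P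
          + eLpNorm (P[g|Bstar i] - P[g|⨅ j, Bstar j]) 1 P) atTop (nhds 0) := by
        have := Filter.Tendsto.add hPf hPg
        simpa using this
      exact tendsto_of_tendsto_of_tendsto_of_le_of_le tendsto_const_nhds hsum
        (fun i => zero_le) hb
    · -- closedness in L¹
      refine IsSeqClosed.isClosed ?_
      intro u F hu hUF
      simp only [Set.mem_setOf_eq] at hu ⊢
      rw [ENNReal.tendsto_nhds_zero]
      intro ε hε
      have hUFel : Tendsto (fun n => eLpNorm (⇑(u n) - ⇑F) 1 P) atTop (nhds 0) := by
        have heq : ∀ n, eLpNorm (⇑(u n) - ⇑F) 1 P = ENNReal.ofReal (dist (u n) F) := by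
          intro n
          rw [Lp.dist_def, ENNReal.ofReal_toReal
            (((Lp.memLp (u n)).sub (Lp.memLp F)).eLpNorm_ne_top)]
        have hdist : Tendsto (fun n => dist (u n) F) atTop (nhds 0) :=
          tendsto_iff_dist_tendsto_zero.1 hUF
        have := (ENNReal.continuous_ofReal.tendsto 0).comp hdist
        simpa [heq, Function.comp_def] using this
      obtain ⟨n, hn⟩ : ∃ n, eLpNorm (⇑(u n) - ⇑F) 1 P ≤ ε / 3 := by
        have := (ENNReal.tendsto_nhds_zero.1 hUFel) (ε / 3)
          (ENNReal.div_pos hε.ne' (by norm_num))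
        exact (this.exists)
      have hmid := (ENNReal.tendsto_nhds_zero.1 (hu n)) (ε / 3)
        (ENNReal.div_pos hε.ne' (by norm_num))
      filter_upwards [hmid] with i hi
      -- triangle inequality
      have hFin : Integrable (⇑F) P := L1.integrable_coeFn F
      have hUin : Integrable (⇑(u n)) P := L1.integrable_coeFn (u n)
      have t1 : eLpNorm (P[⇑F|Bstar i] - P[⇑(u n)|Bstar i]) 1 P ≤ ε / 3 := by
        have hsub : P[⇑F|Bstar i] - P[⇑(u n)|Bstar i] =ᵐ[P] P[⇑F - ⇑(u n)|Bstar i] :=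
          (condExp_sub hFin hUin _).symm
        rw [eLpNorm_congr_ae hsub]
        refine le_trans (eLpNorm_one_condExp_le_eLpNorm _) ?_
        rw [show (⇑F - ⇑(u n) : Ω → ℝ) = -(⇑(u n) - ⇑F) by ring, eLpNorm_neg]
        exact hn
      have t3 : eLpNorm (P[⇑(u n)|⨅ j, Bstar j] - P[⇑F|⨅ j, Bstar j]) 1 P ≤ ε / 3 := by
        have hsub : P[⇑(u n)|⨅ j, Bstar j] - P[⇑F|⨅ j, Bstar j]
            =ᵐ[P] P[⇑(u n) - ⇑F|⨅ j, Bstar j] := (condExp_sub hUin hFin _).symm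
        rw [eLpNorm_congr_ae hsub]
        exact le_trans (eLpNorm_one_condExp_le_eLpNorm _) hn
      have htri : eLpNorm (P[⇑F|Bstar i] - P[⇑F|⨅ j, Bstar j]) 1 P
          ≤ eLpNorm (P[⇑F|Bstar i] - P[⇑(u n)|Bstar i]) 1 P
            + eLpNorm (P[⇑(u n)|Bstar i] - P[⇑(u n)|⨅ j, Bstar j]) 1 P
            + eLpNorm (P[⇑(u n)|⨅ j, Bstar j] - P[⇑F|⨅ j, Bstar j]) 1 P := by
        have heq : P[⇑F|Bstar i] - P[⇑F|⨅ j, Bstar j]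
            = (P[⇑F|Bstar i] - P[⇑(u n)|Bstar i])
              + (P[⇑(u n)|Bstar i] - P[⇑(u n)|⨅ j, Bstar j])
              + (P[⇑(u n)|⨅ j, Bstar j] - P[⇑F|⨅ j, Bstar j]) := by
          funext x; simp only [Pi.add_apply, Pi.sub_apply]; ring
        rw [heq]
        refine le_trans (eLpNorm_add_le ?_ ?_ le_rfl) ?_
        · exact (((stronglyMeasurable_condExp.mono (hBstar i)).aestronglyMeasurable).sub
            ((stronglyMeasurable_condExp.mono (hBstar i)).aestronglyMeasurable)).add
            (((stronglyMeasurable_condExp.mono (hBstar i)).aestronglyMeasurable).sub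
            ((stronglyMeasurable_condExp.mono hminf).aestronglyMeasurable))
        · exact ((stronglyMeasurable_condExp.mono hminf).aestronglyMeasurable).sub
            ((stronglyMeasurable_condExp.mono hminf).aestronglyMeasurable)
        refine add_le_add_left (eLpNorm_add_le ?_ ?_ le_rfl) _
        · exact ((stronglyMeasurable_condExp.mono (hBstar i)).aestronglyMeasurable).sub
            ((stronglyMeasurable_condExp.mono (hBstar i)).aestronglyMeasurable)
        · exact ((stronglyMeasurable_condExp.mono (hBstar i)).aestronglyMeasurable).sub
            ((stronglyMeasurable_condExp.mono hminf).aestronglyMeasurable)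
      calc eLpNorm (P[⇑F|Bstar i] - P[⇑F|⨅ j, Bstar j]) 1 P
          ≤ _ + _ + _ := htri
        _ ≤ ε / 3 + ε / 3 + ε / 3 := add_le_add (add_le_add t1 hi) t3
        _ = ε := ENNReal.add_thirds ε
    · -- a.e. congruence
      intro f g hfg hfint hPf
      have h1 : ∀ i : ℕ, P[f|Bstar i] =ᵐ[P] P[g|Bstar i] := fun i => condExp_congr_ae hfg
      have h2 : P[f|⨅ j, Bstar j] =ᵐ[P] P[g|⨅ j, Bstar j] := condExp_congr_ae hfg
      refine hPf.congr fun i => ?_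
      exact eLpNorm_congr_ae ((h1 i).sub h2)
  exact key hφ


end FollmerAux

/-- Two σ-algebras coincide modulo `P`: each event of one differs from an event of the
other by a `P`-null set. -/
def EqModP {Ω : Type*} {mΩ : MeasurableSpace Ω} (P : MeasureTheory.Measure Ω)
    (m₁ m₂ : MeasurableSpace Ω) : Prop :=
  (∀ s, MeasurableSet[m₁] s → ∃ t, MeasurableSet[m₂] t ∧ P (symmDiff s t) = 0) ∧
  (∀ s, MeasurableSet[m₂] s → ∃ t, MeasurableSet[m₁] t ∧ P (symmDiff s t) = 0)

theorem condexp_sandwich_L1_convergence {Ω : Type*} [m0 : MeasurableSpace Ω]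
    (P : Measure Ω) [IsProbabilityMeasure P]
    (B Bstar : ℕ → MeasurableSpace Ω) (Binf Bstarinf : MeasurableSpace Ω)
    (hBBstar : ∀ i, B i ≤ Bstar i) (hBstar : ∀ i, Bstar i ≤ m0)
    (hmono : Monotone B) (hanti : Antitone Bstar)
    (hBinf : Binf = ⨆ i, B i) (hBstarinf : Bstarinf = ⨅ i, Bstar i)
    (hmod : EqModP P Binf Bstarinf)
    (φ : Ω → ℝ) (hφ : Integrable φ P) :
    Tendsto
      (fun i => ⨆ C ∈ {C : MeasurableSpace Ω | B i ≤ C ∧ C ≤ Bstar i},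
        eLpNorm (P[φ|C] - P[φ|Binf]) 1 P)
      atTop (nhds 0) := by
  subst hBinf
  subst hBstarinf
  have hBle : ∀ i, B i ≤ m0 := fun i => (hBBstar i).trans (hBstar i)
  have hSm0 : (⨆ i, B i) ≤ m0 := iSup_le hBle
  have hSle : ∀ i, (⨆ i, B i) ≤ Bstar i := by
    intro i
    refine iSup_le fun j => ?_
    rcases le_total i j with h | h
    · exact (hBBstar j).trans (hanti h) |>.trans le_rfl
    · exact (hmono h).trans (hBBstar i)
  have hSinf : (⨆ i, B i) ≤ ⨅ j, Bstar j := le_iInf hSle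
  -- ψ is the target conditional expectation
  set ψ : Ω → ℝ := P[φ|⨆ i, B i] with hψdef
  -- the conditional expectation w.r.t. ⨅ Bstar coincides with ψ
  have hχψ : P[φ|⨅ j, Bstar j] =ᵐ[P] ψ := by
    rw [hψdef]
    refine ae_eq_condExp_of_forall_setIntegral_eq hSm0 hφ
      (fun s _ _ => integrable_condExp.integrableOn) ?_ ?_
    · intro s hs _
      exact setIntegral_condExp ((iInf_le Bstar 0).trans (hBstar 0)) hφ (hSinf s hs)
    · -- a.e. strongly measurable w.r.t. (⨆ i, B i) via the mod-P hypothesis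
      have hmeas : Measurable[⨅ j, Bstar j] (P[φ|⨅ j, Bstar j]) :=
        stronglyMeasurable_condExp.measurable
      obtain ⟨g, hgmeas, hgae⟩ := FollmerAux.exists_measurable_ae_eq P (⨆ i, B i)
        (⨅ j, Bstar j) hmod.2 _ hmeas
      exact ⟨g, hgmeas.stronglyMeasurable, hgae⟩
  -- downward convergence
  have hdown : Tendsto (fun i => eLpNorm (P[φ|Bstar i] - ψ) 1 P) atTop (nhds 0) := by
    have h := FollmerAux.tendsto_condexp_iInf P Bstar hBstar hanti φ hφ
    refine h.congr fun i => ?_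
    exact eLpNorm_congr_ae (EventuallyEq.rfl.sub hχψ)
  -- upward convergence
  have hup : Tendsto (fun i => eLpNorm (P[φ|B i] - ψ) 1 P) atTop (nhds 0) := by
    have h := MeasureTheory.tendsto_eLpNorm_condExp (μ := P)
      (ℱ := ⟨B, hmono, hBle⟩) φ
    have hsup : (⨆ n, (⟨B, hmono, hBle⟩ : Filtration ℕ m0) n) = ⨆ i, B i := rfl
    rw [hψdef]
    rw [hsup] at h
    exact h
  -- the key bound
  have hkey : ∀ i, (⨆ C ∈ {C : MeasurableSpace Ω | B i ≤ C ∧ C ≤ Bstar i},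
      eLpNorm (P[φ|C] - P[φ|(⨆ i, B i)]) 1 P)
      ≤ (eLpNorm (P[φ|Bstar i] - ψ) 1 P + eLpNorm (P[φ|B i] - ψ) 1 P)
        + eLpNorm (P[φ|B i] - ψ) 1 P := by
    intro i
    refine iSup_le fun C => iSup_le fun hC => ?_
    obtain ⟨hC1, hC2⟩ := hC
    have hCm0 : C ≤ m0 := hC2.trans (hBstar i)
    have h1 : P[φ|C] =ᵐ[P] P[P[φ|Bstar i]|C] := (condExp_condExp_of_le hC2 (hBstar i)).symm
    have h2 : P[P[φ|B i]|C] = P[φ|B i] :=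
      condExp_of_stronglyMeasurable hCm0 (stronglyMeasurable_condExp.mono hC1)
        integrable_condExp
    have h3 : P[P[φ|Bstar i]|C] - P[P[φ|B i]|C]
        =ᵐ[P] P[P[φ|Bstar i] - P[φ|B i]|C] :=
      (condExp_sub integrable_condExp integrable_condExp _).symm
    have heq : P[φ|C] - P[φ|(⨆ i, B i)]
        =ᵐ[P] P[P[φ|Bstar i] - P[φ|B i]|C] + (P[φ|B i] - ψ) := by
      filter_upwards [h1, h3] with x hx1 hx3
      have hx2 := congrFun h2 x
      simp only [Pi.sub_apply, Pi.add_apply] at hx1 hx3 hx2 ⊢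
      rw [← hx3, hx1, hx2, hψdef]
      ring
    rw [eLpNorm_congr_ae heq]
    have hsm1 : AEStronglyMeasurable[m0] (P[P[φ|Bstar i] - P[φ|B i]|C]) P :=
      (stronglyMeasurable_condExp.mono hCm0).aestronglyMeasurable
    have hsm2 : AEStronglyMeasurable[m0] (P[φ|B i] - ψ) P :=
      ((stronglyMeasurable_condExp.mono (hBle i)).aestronglyMeasurable).sub
        ((stronglyMeasurable_condExp.mono hSm0).aestronglyMeasurable)
    refine le_trans (eLpNorm_add_le hsm1 hsm2 le_rfl) ?_
    refine add_le_add_left ?_ _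
    refine le_trans (eLpNorm_one_condExp_le_eLpNorm _) ?_
    have hre : P[φ|Bstar i] - P[φ|B i] = (P[φ|Bstar i] - ψ) - (P[φ|B i] - ψ) := by
      funext x; simp only [Pi.sub_apply]; ring
    rw [hre]
    exact eLpNorm_sub_le
      (((stronglyMeasurable_condExp.mono (hBstar i)).aestronglyMeasurable).sub
        ((stronglyMeasurable_condExp.mono hSm0).aestronglyMeasurable))
      (((stronglyMeasurable_condExp.mono (hBle i)).aestronglyMeasurable).sub
        ((stronglyMeasurable_condExp.mono hSm0).aestronglyMeasurable)) le_rfl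
  have hbound : Tendsto (fun i => (eLpNorm (P[φ|Bstar i] - ψ) 1 P
      + eLpNorm (P[φ|B i] - ψ) 1 P) + eLpNorm (P[φ|B i] - ψ) 1 P) atTop (nhds 0) := by
    have := (hdown.add hup).add hup
    simpa using this
  exact tendsto_of_tendsto_of_tendsto_of_le_of_le tendsto_const_nhds hbound
    (fun i => zero_le) hkey
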